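/- For all trace-free A, B, C, D ∈ SL(2,ℂ): tr(ABCD) = (1/2)·(tr(AB)·tr(CD) + tr(AD)·tr(BC) − tr(AC)·tr(BD)). -/
import Mathlib


open Matrix

/-- `SL(2,ℂ)`. -/
abbrev SL2C := Matrix.SpecialLinearGroup (Fin 2) ℂ

/-- The trace of an element of `SL(2,ℂ)`. -/
noncomputable def trSL2 (A : SL2C) : ℂ := Matrix.trace (A : Matrix (Fin 2) (Fin 2) ℂ)

/-- For trace-free `A, B, C, D ∈ SL(2,ℂ)`:
`tr(ABCD) = (1/2)(tr(AB)tr(CD) + tr(AD)tr(BC) − tr(AC)tr(BD))`. -/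
theorem stmt6 (A B C D : SL2C)
    (hA : trSL2 A = 0) (hB : trSL2 B = 0) (hC : trSL2 C = 0) (hD : trSL2 D = 0) :
    trSL2 (A * B * C * D) =
      (1 / 2) * (trSL2 (A * B) * trSL2 (C * D) + trSL2 (A * D) * trSL2 (B * C)
        - trSL2 (A * C) * trSL2 (B * D)) := by
  simp only [trSL2, Matrix.trace_fin_two, Matrix.SpecialLinearGroup.coe_mul,
    Matrix.mul_apply, Fin.sum_univ_two] at *
  have eA : (A : Matrix (Fin 2) (Fin 2) ℂ) 1 1 = -(A : Matrix (Fin 2) (Fin 2) ℂ) 0 0 := by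
    linear_combination hA
  have eB : (B : Matrix (Fin 2) (Fin 2) ℂ) 1 1 = -(B : Matrix (Fin 2) (Fin 2) ℂ) 0 0 := by
    linear_combination hB
  have eC : (C : Matrix (Fin 2) (Fin 2) ℂ) 1 1 = -(C : Matrix (Fin 2) (Fin 2) ℂ) 0 0 := by
    linear_combination hC
  have eD : (D : Matrix (Fin 2) (Fin 2) ℂ) 1 1 = -(D : Matrix (Fin 2) (Fin 2) ℂ) 0 0 := by
    linear_combination hD
  rw [eA, eB, eC, eD]
  ring
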